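/- Let R be a ring, and for a left R-module M let κ(M) denote the least ordinal κ such that the dual of the interval [0,κ) of ordinals does not order-embed into the lattice of submodules of M. If (M_i)_{i∈Ω} is a family of left R-modules such that the cardinality of {i ∈ Ω : M_i is faithful} is at least |κ(R)| (κ of R as a left module over itself), then there is a left R-module embedding of R into ∏_{i∈Ω} M_i. -/
import Mathlib

universe u

/-- `κ(M)`: the least ordinal `κ` such that the dual of `[0, κ)` does not order-embed
into the lattice of submodules of `M`, i.e. there is no strictly decreasing chain of
submodules of `M` indexed by the ordinals below `κ`. -/
noncomputable def kappa (R : Type u) [Ring R] (M : Type u) [AddCommGroup M] [Module R M] :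
    Ordinal.{u} :=
  sInf {κ : Ordinal.{u} | ¬ ∃ f : (Set.Iio κ) → Submodule R M, StrictAnti f}

section Aux

variable {R : Type u} [Ring R] {Ω : Type u} {M : Ω → Type u}
  [∀ i, AddCommGroup (M i)] [∀ i, Module R (M i)] {κ : Ordinal.{u}}

/-- From faithfulness: a nonzero `r` acts nontrivially on some element. -/
theorem exists_smul_ne (ι : Set.Iio κ → Ω)
    (hι : ∀ α, ∀ r : R, (∀ m : M (ι α), r • m = 0) → r = 0)
    {r : R} (hr : r ≠ 0) (α : Set.Iio κ) : ∃ m : M (ι α), r • m ≠ 0 := by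
  by_contra h
  push_neg at h
  exact hr (hι α r h)

theorem wfIio : WellFounded (fun a b : Set.Iio κ => a < b) :=
  InvImage.wf Subtype.val Ordinal.lt_wf

open Classical in
/-- The transfinite chain of elements: at each stage, if some nonzero `r` kills all
previously chosen elements, choose an element not killed by `r`. -/
noncomputable def chainElem (ι : Set.Iio κ → Ω)
    (hι : ∀ α, ∀ r : R, (∀ m : M (ι α), r • m = 0) → r = 0) :
    ∀ α : Set.Iio κ, M (ι α) :=
  wfIio.fix (fun α rec =>
    if h : ∃ r : R, r ≠ 0 ∧ ∀ β (hβ : β < α), r • rec β hβ = 0 then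
      (exists_smul_ne ι hι h.choose_spec.1 α).choose
    else 0)

/-- The dichotomy at each stage. -/
theorem chainElem_dichotomy (ι : Set.Iio κ → Ω)
    (hι : ∀ α, ∀ r : R, (∀ m : M (ι α), r • m = 0) → r = 0) (α : Set.Iio κ) :
    (∃ r : R, r ≠ 0 ∧ (∀ β, β < α → r • chainElem ι hι β = 0) ∧
        r • chainElem ι hι α ≠ 0) ∨
      (∀ r : R, (∀ β, β < α → r • chainElem ι hι β = 0) → r = 0) := by
  classical
  have heq := wfIio.fix_eq (fun α (rec : ∀ β : Set.Iio κ, β < α → M (ι β)) =>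
    if h : ∃ r : R, r ≠ 0 ∧ ∀ β (hβ : β < α), r • rec β hβ = 0 then
      (exists_smul_ne ι hι h.choose_spec.1 α).choose
    else 0) α
  by_cases h : ∃ r : R, r ≠ 0 ∧ ∀ β (hβ : β < α), r • chainElem ι hι β = 0
  · left
    refine ⟨h.choose, h.choose_spec.1, fun β hβ => h.choose_spec.2 β hβ, ?_⟩
    have hunfold : chainElem ι hι α =
        (if h : ∃ r : R, r ≠ 0 ∧ ∀ β (hβ : β < α), r • chainElem ι hι β = 0 then
          (exists_smul_ne ι hι h.choose_spec.1 α).choose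
        else 0) := heq
    rw [hunfold, dif_pos h]
    exact (exists_smul_ne ι hι h.choose_spec.1 α).choose_spec
  · right
    intro r hr
    by_contra hr0
    exact h ⟨r, hr0, fun β hβ => hr β hβ⟩

end Aux

/-- If `(Mᵢ)_{i∈Ω}` is a family of left `R`-modules such that the number
of faithful `Mᵢ` is at least `|κ(R)|`, then `R` embeds as a left `R`-module into
`∏_{i∈Ω} Mᵢ`. -/
theorem stmt11 (R : Type u) [Ring R] (Ω : Type u) (M : Ω → Type u)
    [∀ i, AddCommGroup (M i)] [∀ i, Module R (M i)]
    (hcard : (kappa R R).card ≤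
      Cardinal.mk {i : Ω // ∀ r : R, (∀ m : M i, r • m = 0) → r = 0}) :
    ∃ f : R →ₗ[R] ((i : Ω) → M i), Function.Injective f := by
  classical
  set κ := kappa R R with hκdef
  -- κ belongs to the defining set
  have hne : {κ' : Ordinal.{u} | ¬ ∃ f : (Set.Iio κ') → Submodule R R, StrictAnti f}.Nonempty := by
    refine ⟨(Order.succ (Cardinal.mk (Submodule R R))).ord, ?_⟩
    rintro ⟨f, hf⟩
    have hinj : Function.Injective f := hf.injective
    have h1 := Cardinal.lift_mk_le_lift_mk_of_injective hinj
    rw [Ordinal.mk_Iio_ordinal, Cardinal.lift_lift, Cardinal.card_ord] at h1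
    rw [Cardinal.lift_le] at h1
    exact absurd h1 (Order.lt_succ _).not_ge
  have hκ : ¬ ∃ f : (Set.Iio κ) → Submodule R R, StrictAnti f := csInf_mem hne
  -- get an injection from Iio κ into the faithful indices
  set F := {i : Ω // ∀ r : R, (∀ m : M i, r • m = 0) → r = 0} with hF
  have hemb : Nonempty (Set.Iio κ ↪ F) := by
    rw [← Cardinal.lift_mk_le']
    rw [Ordinal.mk_Iio_ordinal, Cardinal.lift_lift]
    exact Cardinal.lift_le.mpr hcard
  obtain ⟨emb⟩ := hemb
  set ι : Set.Iio κ → Ω := fun α => (emb α).1 with hιdef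
  have hιinj : Function.Injective ι := fun a b h => emb.injective (Subtype.ext h)
  have hι : ∀ α, ∀ r : R, (∀ m : M (ι α), r • m = 0) → r = 0 := fun α => (emb α).2
  set e := chainElem ι hι with he
  -- there must be a stage α where the "kill everything" case fails
  have hstage : ∃ α : Set.Iio κ, ∀ r : R, (∀ β, β < α → r • e β = 0) → r = 0 := by
    by_contra hA
    push_neg at hA
    have hA' : ∀ α : Set.Iio κ, ∃ r : R, r ≠ 0 ∧ (∀ β, β < α → r • e β = 0) ∧
        r • e α ≠ 0 := by
      intro α
      rcases chainElem_dichotomy ι hι α with h | h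
      · exact h
      · obtain ⟨r, hr1, hr2⟩ := hA α
        exact absurd (h r hr1) hr2
    -- build a strictly decreasing chain of submodules
    refine hκ ⟨fun α => ⨅ (β : Set.Iio κ) (_ : β ≤ α),
      LinearMap.ker (LinearMap.toSpanSingleton R (M (ι β)) (e β)), ?_⟩
    intro β α hβα
    constructor
    · -- g α ≤ g β
      refine SetLike.le_def.mpr fun x hx => ?_
      refine (Submodule.mem_iInf _).mpr fun γ => (Submodule.mem_iInf _).mpr fun hγ => ?_
      exact (Submodule.mem_iInf _).mp ((Submodule.mem_iInf _).mp hx γ) (le_trans hγ hβα.le)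
    · -- ¬ g β ≤ g α
      intro hle
      obtain ⟨r, hr0, hrkill, hrne⟩ := hA' α
      have hrβ : r ∈ ⨅ (γ : Set.Iio κ) (_ : γ ≤ β),
          LinearMap.ker (LinearMap.toSpanSingleton R (M (ι γ)) (e γ)) := by
        refine Submodule.mem_iInf _ |>.mpr fun γ => Submodule.mem_iInf _ |>.mpr fun hγ => ?_
        exact hrkill γ (lt_of_le_of_lt hγ hβα)
      have hrα := Submodule.mem_iInf _ |>.mp
        (Submodule.mem_iInf _ |>.mp (hle hrβ) α) le_rfl
      exact hrne hrα
  obtain ⟨α, hα⟩ := hstage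
  -- assemble the element of the product
  set n : ∀ i, M i := fun i =>
    if h : ∃ β : Set.Iio κ, β < α ∧ ι β = i then h.choose_spec.2 ▸ e h.choose else 0
    with hn
  have hnspec : ∀ β : Set.Iio κ, β < α → n (ι β) = e β := by
    intro β hβ
    have h : ∃ β' : Set.Iio κ, β' < α ∧ ι β' = ι β := ⟨β, hβ, rfl⟩
    have : n (ι β) = h.choose_spec.2 ▸ e h.choose := dif_pos h
    rw [this]
    have key : ∀ (γ : Set.Iio κ) (hγ : ι γ = ι β), (hγ ▸ e γ : M (ι β)) = e β := by
      intro γ hγ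
      have hγβ : γ = β := hιinj hγ
      subst hγβ
      rfl
    exact key h.choose h.choose_spec.2
  refine ⟨LinearMap.toSpanSingleton R _ n, ?_⟩
  rw [← LinearMap.ker_eq_bot, eq_bot_iff]
  intro r hr
  simp only [LinearMap.mem_ker, LinearMap.toSpanSingleton_apply] at hr
  have hr' : ∀ β : Set.Iio κ, β < α → r • e β = 0 := by
    intro β hβ
    rw [← hnspec β hβ]
    exact congrFun hr (ι β)
  simpa using hα r hr'
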